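/- Let m ≥ 1 and let ∞ > s₁ ≥ s₂ ≥ ⋯ ≥ s_m ≥ 0 be real numbers. Then the iterated integral ∫_{s₁}^{∞} dt₁ ∫_{s₂}^{s₁} dt₂ ⋯ ∫_{s_m}^{s_{m−1}} dt_m ∏_{k=1}^{m} t_k e^{−t_k²/2} · ∏_{1≤j<k≤m} (t_j² − t_k²) equals ∏_{k=1}^{m} e^{−s_k²/2} · ∏_{1≤j<k≤m} (s_j² − s_k²). -/

import Mathlib

open MeasureTheory

section GaussAux
open Filter Polynomial

noncomputable def gQ : ℕ → Polynomial ℝ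
  | 0 => 1
  | (k+1) => Polynomial.X ^ (k+1) - Polynomial.C 2 * Polynomial.C ((k:ℝ)+1) * gQ k

lemma gQ_natDegree : ∀ k, (gQ k).natDegree = k := by
  intro k
  induction k with
  | zero => simp [gQ]
  | succ k ih =>
    rw [gQ]
    rw [natDegree_sub_eq_left_of_natDegree_lt]
    · exact natDegree_X_pow _
    · calc (C 2 * C ((k:ℝ)+1) * gQ k).natDegree
          ≤ (C 2 * C ((k:ℝ)+1)).natDegree + (gQ k).natDegree := natDegree_mul_le
        _ ≤ 0 + k := by
            rw [← C_mul, natDegree_C, ih]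
        _ < k + 1 := by omega
        _ = (X ^ (k+1) : ℝ[X]).natDegree := (natDegree_X_pow _).symm

lemma gQ_monic : ∀ k, (gQ k).Monic := by
  intro k
  induction k with
  | zero => simpa [gQ] using monic_one
  | succ k ih =>
    rw [gQ]
    apply (monic_X_pow (k+1)).sub_of_left
    rw [degree_X_pow]
    refine lt_of_le_of_lt degree_le_natDegree ?_
    have hn : (C 2 * C ((k:ℝ)+1) * gQ k).natDegree ≤ k := by
      refine le_trans natDegree_mul_le ?_
      rw [← C_mul, natDegree_C, gQ_natDegree]
      omega
    exact_mod_cast Nat.lt_succ_of_le hn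

lemma gQ_key : ∀ k, gQ k + Polynomial.C 2 * Polynomial.derivative (gQ k)
    = Polynomial.X ^ k := by
  intro k
  induction k with
  | zero => simp [gQ]
  | succ k ih =>
    rw [gQ]
    rw [derivative_sub, derivative_X_pow, derivative_mul, derivative_mul]
    push_cast
    simp only [derivative_C, zero_mul, mul_zero, zero_add, add_zero]
    linear_combination (-(C 2 * C ((k:ℝ)+1))) * ih


noncomputable def gF (k : ℕ) (t : ℝ) : ℝ := -(Real.exp (-t^2/2) * (gQ k).eval (-t^2))

noncomputable def gf (k : ℕ) (t : ℝ) : ℝ := t * Real.exp (-t^2/2) * (-t^2)^k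

lemma gf_cont (k : ℕ) : Continuous (gf k) := by
  unfold gf; fun_prop

lemma gF_hasDerivAt (k : ℕ) (t : ℝ) : HasDerivAt (gF k) (gf k t) t := by
  have hE : HasDerivAt (fun t : ℝ => Real.exp (-t^2/2)) (-t * Real.exp (-t^2/2)) t := by
    have h1 : HasDerivAt (fun t : ℝ => -t^2/2) (-t) t := by
      have := ((hasDerivAt_pow 2 t).neg.div_const 2)
      refine this.congr_deriv ?_
      push_cast; ring
    simpa [mul_comm] using h1.exp
  have h2 : HasDerivAt (fun t : ℝ => -t^2) (-(2*t)) t := by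
    have := (hasDerivAt_pow 2 t).neg
    refine this.congr_deriv ?_
    push_cast; ring
  have hP : HasDerivAt (fun t : ℝ => (gQ k).eval (-t^2))
      ((Polynomial.derivative (gQ k)).eval (-t^2) * (-(2*t))) t :=
    by have := ((gQ k).hasDerivAt (-t^2)).comp t h2; exact this
  have h := (hE.mul hP).neg
  refine h.congr_deriv ?_
  have key : (gQ k).eval (-t^2) + 2 * (Polynomial.derivative (gQ k)).eval (-t^2)
      = (-t^2)^k := by
    have := congrArg (Polynomial.eval (-t^2)) (gQ_key k)
    simpa using this
  unfold gf
  rw [← key]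
  ring

lemma gF_tendsto (k : ℕ) : Tendsto (gF k) atTop (nhds 0) := by
  have h1 : Tendsto (fun u : ℝ =>
      (((gQ k).comp (-Polynomial.X)).comp (Polynomial.C 2 * Polynomial.X)).eval u
        / Real.exp u) atTop (nhds 0) := Polynomial.tendsto_div_exp_atTop _
  have h2 : Tendsto (fun t : ℝ => t^2/2) atTop atTop :=
    (tendsto_pow_atTop two_ne_zero).atTop_div_const two_pos
  have h3 := (h1.comp h2).neg
  have heq : gF k = fun t : ℝ =>
      -((((gQ k).comp (-Polynomial.X)).comp (Polynomial.C 2 * Polynomial.X)).eval (t^2/2)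
        / Real.exp (t^2/2)) := by
    funext t
    unfold gF
    rw [Polynomial.eval_comp, Polynomial.eval_comp]
    simp only [Polynomial.eval_mul, Polynomial.eval_C, Polynomial.eval_X, Polynomial.eval_neg]
    rw [show (2 : ℝ) * (t^2/2) = t^2 by ring, neg_div, Real.exp_neg]
    ring
  rw [heq]
  simpa using h3

lemma gf_eq (k : ℕ) (t : ℝ) :
    gf k t = (-1:ℝ)^k * (t * Real.exp (-t^2/2) * (t^2)^k) := by
  unfold gf; rw [neg_pow]; ring

lemma gf_integrableOn_Ioi (k : ℕ) {a : ℝ} (ha : 0 ≤ a) :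
    IntegrableOn (gf k) (Set.Ioi a) := by
  have hD : ∀ x : ℝ, HasDerivAt (fun t => (-1:ℝ)^k * gF k t)
      (x * Real.exp (-x^2/2) * (x^2)^k) x := by
    intro x
    have h := (gF_hasDerivAt k x).const_mul ((-1:ℝ)^k)
    refine h.congr_deriv ?_
    rw [gf_eq, ← mul_assoc, ← mul_pow]
    norm_num
  have htend : Tendsto (fun t => (-1:ℝ)^k * gF k t) atTop (nhds 0) := by
    simpa using (gF_tendsto k).const_mul ((-1:ℝ)^k)
  have h0 : IntegrableOn (fun x : ℝ => x * Real.exp (-x^2/2) * (x^2)^k) (Set.Ioi a) := by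
    refine integrableOn_Ioi_deriv_of_nonneg ((hD a).continuousAt.continuousWithinAt)
      (fun x _ => hD x) (fun x hx => ?_) htend
    have hx0 : (0:ℝ) ≤ x := le_of_lt (lt_of_le_of_lt ha hx)
    positivity
  have h1 : IntegrableOn (fun x : ℝ => (-1:ℝ)^k * (x * Real.exp (-x^2/2) * (x^2)^k))
      (Set.Ioi a) := h0.const_mul _
  exact h1.congr_fun (fun x _ => (gf_eq k x).symm) measurableSet_Ioi

lemma gf_integral_Ioi (k : ℕ) {a : ℝ} (ha : 0 ≤ a) :
    ∫ x in Set.Ioi a, gf k x = -gF k a := by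
  have := integral_Ioi_of_hasDerivAt_of_tendsto
    ((gF_hasDerivAt k a).continuousAt.continuousWithinAt)
    (fun x _ => gF_hasDerivAt k x) (gf_integrableOn_Ioi k ha) (gF_tendsto k)
  simpa using this

lemma gf_integral_Ioo (k : ℕ) {a b : ℝ} (hab : a ≤ b) :
    ∫ x in Set.Ioo a b, gf k x = gF k b - gF k a := by
  rw [← integral_Ioc_eq_integral_Ioo, ← intervalIntegral.integral_of_le hab]
  exact intervalIntegral.integral_eq_sub_of_hasDerivAt (fun x _ => gF_hasDerivAt k x)
    ((gf_cont k).intervalIntegrable a b)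

lemma prod_Iio_fin {M : Type*} [CommMonoid M] {m : ℕ} (k : Fin m) (f : ℕ → M) :
    ∏ i ∈ Finset.Iio k, f (i:ℕ) = ∏ i ∈ Finset.range (k:ℕ), f i := by
  rw [← Nat.Iio_eq_range, ← Fin.map_valEmbedding_Iio, Finset.prod_map]
  rfl


end GaussAux

/-- Gauss case, even order.  Integrating the odd-indexed singular-value
density `∏ t_k e^{-t_k²/2} ∏_{j<k}(t_j² - t_k²)` over the interlacing box
`t₁ ∈ (s₁,∞), t_k ∈ (s_k, s_{k-1})` yields `∏ e^{-s_k²/2} ∏_{j<k}(s_j² - s_k²)`. -/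
theorem gauss_even_integrate_odd (m : ℕ) (hm : 1 ≤ m) (s : ℕ → ℝ)
    (hdec : ∀ i, 1 ≤ i → i < m → s (i + 1) ≤ s i) (hsm : 0 ≤ s m) :
    (∫ t in {t : Fin m → ℝ | ∀ i : Fin m,
        s ((i : ℕ) + 1) < t i ∧ (0 < (i : ℕ) → t i < s (i : ℕ))},
      (∏ k : Fin m, t k * Real.exp (-(t k) ^ 2 / 2)) *
        ∏ k : Fin m, ∏ j ∈ Finset.Iio k, ((t j) ^ 2 - (t k) ^ 2)) =
    (∏ k ∈ Finset.Icc 1 m, Real.exp (-(s k) ^ 2 / 2)) *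
      ∏ k ∈ Finset.Icc 1 m, ∏ j ∈ Finset.Ico 1 k, ((s j) ^ 2 - (s k) ^ 2) := by
  classical
  have hmono : ∀ i j : ℕ, 1 ≤ i → i ≤ j → j ≤ m → s j ≤ s i := by
    intro i j h1 hij hjm
    induction j, hij using Nat.le_induction with
    | base => exact le_rfl
    | succ j hij ih => exact le_trans (hdec j (h1.trans hij) (by omega)) (ih (by omega))
  have hpos : ∀ i : ℕ, 1 ≤ i → i ≤ m → (0:ℝ) ≤ s i := fun i h1 him =>
    le_trans hsm (hmono i m h1 him le_rfl)
  set I : Fin m → Set ℝ := fun j =>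
    if (j:ℕ) = 0 then Set.Ioi (s 1) else Set.Ioo (s ((j:ℕ)+1)) (s (j:ℕ)) with hI
  have hImeas : ∀ j, MeasurableSet (I j) := by
    intro j; by_cases h : (j:ℕ) = 0 <;> simp [hI, h]
  have hset : {t : Fin m → ℝ | ∀ i : Fin m,
      s ((i:ℕ)+1) < t i ∧ (0 < (i:ℕ) → t i < s (i:ℕ))} = Set.univ.pi I := by
    ext t
    simp only [Set.mem_setOf_eq, Set.mem_pi, Set.mem_univ, true_implies]
    refine forall_congr' fun i => ?_
    by_cases h : (i:ℕ) = 0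
    · simp [hI, h]
    · simp [hI, h, Set.mem_Ioo, Nat.pos_of_ne_zero h]
  set A : Matrix (Fin m) (Fin m) ℝ :=
    Matrix.of (fun j k : Fin m => ∫ x in I j, gf (k:ℕ) x) with hA
  -- pointwise identity
  have hpoint : ∀ t : Fin m → ℝ,
      (Set.univ.pi I).indicator (fun t : Fin m → ℝ =>
        (∏ k : Fin m, t k * Real.exp (-(t k)^2/2)) *
          ∏ k : Fin m, ∏ j ∈ Finset.Iio k, ((t j)^2 - (t k)^2)) t
      = (Matrix.of (fun j k : Fin m => (I j).indicator (gf (k:ℕ)) (t j))).det := by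
    intro t
    by_cases ht : t ∈ Set.univ.pi I
    · rw [Set.indicator_of_mem ht]
      have htj : ∀ j : Fin m, t j ∈ I j := fun j => ht j (Set.mem_univ j)
      have hM : (Matrix.of (fun j k : Fin m => (I j).indicator (gf (k:ℕ)) (t j)))
          = Matrix.of (fun j k : Fin m =>
              (t j * Real.exp (-(t j)^2/2)) *
                Matrix.vandermonde (fun i : Fin m => -(t i)^2) j k) := by
        ext j k
        simp only [Matrix.of_apply, Set.indicator_of_mem (htj j), Matrix.vandermonde]
        simp [gf]
      rw [hM, Matrix.det_mul_column, Matrix.det_vandermonde]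
      congr 1
      rw [Finset.prod_comm' (t' := Finset.univ) (s' := fun j => Finset.Ioi j)
        (fun x y => by simp [Finset.mem_Iio, Finset.mem_Ioi, and_comm])]
      exact Finset.prod_congr rfl fun i _ => Finset.prod_congr rfl fun j _ => by ring
    · rw [Set.indicator_of_notMem ht]
      have hex : ∃ j : Fin m, t j ∉ I j := by
        by_contra hcon; push_neg at hcon; exact ht (fun j _ => hcon j)
      obtain ⟨j0, hj0⟩ := hex
      symm
      apply Matrix.det_eq_zero_of_row_eq_zero j0
      intro k
      simp [Set.indicator_of_notMem hj0]
  have hIOn : ∀ n : ℕ, ∀ j : Fin m, IntegrableOn (gf n) (I j) := by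
    intro n j
    by_cases h : (j:ℕ) = 0
    · simpa only [hI, if_pos h] using gf_integrableOn_Ioi n (hpos 1 le_rfl hm)
    · simp only [hI, if_neg h]
      exact (((gf_cont n).integrableOn_Icc)).mono_set Set.Ioo_subset_Icc_self
  have hint : ∀ σ : Equiv.Perm (Fin m), Integrable (fun t : Fin m → ℝ =>
      ∏ j : Fin m, (I j).indicator (gf ((σ⁻¹ j : Fin m):ℕ)) (t j)) := by
    intro σ
    apply Integrable.fintype_prod
      (f := fun (j : Fin m) (x:ℝ) => (I j).indicator (gf ((σ⁻¹ j : Fin m):ℕ)) x)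
    intro j
    exact (hIOn _ j).integrable_indicator (hImeas j)
  -- the integral equals det A
  have hstep : (∫ t : Fin m → ℝ,
      (Matrix.of (fun j k : Fin m => (I j).indicator (gf (k:ℕ)) (t j))).det) = A.det := by
    have hre : ∀ (σ : Equiv.Perm (Fin m)) (t : Fin m → ℝ),
        (∏ i : Fin m, (I (σ i)).indicator (gf (i:ℕ)) (t (σ i)))
          = ∏ j : Fin m, (I j).indicator (gf ((σ⁻¹ j : Fin m):ℕ)) (t j) := by
      intro σ t
      rw [← Equiv.prod_comp σ
        (fun j => (I j).indicator (gf ((σ⁻¹ j : Fin m):ℕ)) (t j))]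
      exact Finset.prod_congr rfl fun i _ => by rw [Equiv.Perm.inv_def, Equiv.symm_apply_apply]
    calc (∫ t : Fin m → ℝ,
        (Matrix.of (fun j k : Fin m => (I j).indicator (gf (k:ℕ)) (t j))).det)
        = ∫ t : Fin m → ℝ, ∑ σ : Equiv.Perm (Fin m), ((Equiv.Perm.sign σ : ℤ) : ℝ) *
            ∏ j : Fin m, (I j).indicator (gf ((σ⁻¹ j : Fin m):ℕ)) (t j) := by
          congr 1; funext t
          rw [Matrix.det_apply']
          exact Finset.sum_congr rfl fun σ _ => by rw [← hre σ t]; rfl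
      _ = ∑ σ : Equiv.Perm (Fin m), ((Equiv.Perm.sign σ : ℤ) : ℝ) *
            ∏ j : Fin m, ∫ x : ℝ, (I j).indicator (gf ((σ⁻¹ j : Fin m):ℕ)) x := by
          rw [integral_finset_sum _ (fun σ _ => (hint σ).const_mul _)]
          refine Finset.sum_congr rfl fun σ _ => ?_
          rw [integral_const_mul, MeasureTheory.integral_fintype_prod_volume_eq_prod (ι := Fin m)
            (f := fun j x => (I j).indicator (gf ((σ⁻¹ j : Fin m):ℕ)) x)]
      _ = ∑ σ : Equiv.Perm (Fin m), ((Equiv.Perm.sign σ : ℤ) : ℝ) *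
            ∏ j : Fin m, A j (σ⁻¹ j) := by
          refine Finset.sum_congr rfl fun σ _ => ?_
          congr 1
          exact Finset.prod_congr rfl fun j _ => integral_indicator (hImeas j)
      _ = A.det := by
          rw [← Matrix.det_transpose A, Matrix.det_apply']
          rw [← Equiv.sum_comp (Equiv.inv (Equiv.Perm (Fin m)))
            (fun σ => ((Equiv.Perm.sign σ : ℤ):ℝ) * ∏ i : Fin m, A.transpose (σ i) i)]
          refine Finset.sum_congr rfl fun σ _ => ?_
          simp only [Equiv.inv_apply, Matrix.transpose_apply, Equiv.Perm.sign_inv]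
  -- matrices B, C, L
  set c : Fin m → ℝ := fun j => Real.exp (-(s ((j:ℕ)+1))^2/2) with hc
  set CM : Matrix (Fin m) (Fin m) ℝ :=
    Matrix.of (fun j k : Fin m => (gQ (k:ℕ)).eval (-(s ((j:ℕ)+1))^2)) with hCM
  set B : Matrix (Fin m) (Fin m) ℝ := Matrix.of (fun j k : Fin m => c j * CM j k) with hB
  have hBF : ∀ j k : Fin m, B j k = -gF (k:ℕ) (s ((j:ℕ)+1)) := by
    intro j k; simp [hB, hc, hCM, gF]
  set L : Matrix (Fin m) (Fin m) ℝ := Matrix.of (fun j i : Fin m =>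
    if i = j then 1 else if (i:ℕ)+1 = (j:ℕ) then -1 else 0) with hL
  have hALB : A = L * B := by
    ext j k
    rw [Matrix.mul_apply]
    have hsplit : ∀ i : Fin m, L j i * B i k
        = (if i = j then B i k else 0) + (if (i:ℕ)+1 = (j:ℕ) then -B i k else 0) := by
      intro i
      by_cases h1 : i = j
      · have h2 : ¬((i:ℕ)+1 = (j:ℕ)) := by subst h1; omega
        simp [hL, h1, h2]
      · by_cases h2 : (i:ℕ)+1 = (j:ℕ) <;> simp [hL, h1, h2]
    simp_rw [hsplit]
    rw [Finset.sum_add_distrib, Finset.sum_ite_eq' Finset.univ j (fun i => B i k)]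
    simp only [Finset.mem_univ, if_true]
    rcases Nat.eq_zero_or_pos (j:ℕ) with hj | hj
    · have hzero : (∑ i : Fin m, if (i:ℕ)+1 = (j:ℕ) then -B i k else 0) = 0 :=
        Finset.sum_eq_zero fun i _ => by rw [if_neg (by omega)]
      have hAjk : A j k = -gF (k:ℕ) (s 1) := by
        show (∫ x in I j, gf (k:ℕ) x) = _
        rw [show I j = Set.Ioi (s 1) by simp [hI, hj]]
        exact gf_integral_Ioi _ (hpos 1 le_rfl hm)
      rw [hAjk, hzero, add_zero, hBF, hj]
    · have hjm : (j:ℕ) < m := j.isLt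
      have hi0m : (j:ℕ) - 1 < m := by omega
      set i0 : Fin m := ⟨(j:ℕ)-1, hi0m⟩ with hi0
      have hsum : (∑ i : Fin m, if (i:ℕ)+1 = (j:ℕ) then -B i k else 0) = -B i0 k := by
        rw [Finset.sum_eq_single i0]
        · rw [if_pos (by simp only [hi0]; omega)]
        · intro i _ hne
          rw [if_neg (fun hcon => hne (Fin.ext (by simp only [hi0]; omega)))]
        · intro habs; exact absurd (Finset.mem_univ i0) habs
      have hAjk : A j k = gF (k:ℕ) (s (j:ℕ)) - gF (k:ℕ) (s ((j:ℕ)+1)) := by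
        show (∫ x in I j, gf (k:ℕ) x) = _
        rw [show I j = Set.Ioo (s ((j:ℕ)+1)) (s (j:ℕ)) by simp [hI]; omega]
        exact gf_integral_Ioo _ (hdec (j:ℕ) hj hjm)
      rw [hsum, hAjk, hBF, hBF]
      have hi01 : (i0:ℕ)+1 = (j:ℕ) := by simp only [hi0]; omega
      rw [hi01]
      ring
  have hdetL : L.det = 1 := by
    have htri : L.BlockTriangular OrderDual.toDual := by
      intro a b hab
      have hab' : a < b := hab
      have h1 : ¬(b = a) := ne_of_gt hab'
      have h2 : ¬((b:ℕ)+1 = (a:ℕ)) := by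
        have := Fin.lt_iff_val_lt_val.mp hab'; omega
      simp [hL, h1, h2]
    rw [Matrix.det_of_lowerTriangular L htri]
    exact Finset.prod_eq_one fun i _ => by simp [hL]
  have hdetB : B.det = (∏ j : Fin m, c j) * CM.det := Matrix.det_mul_column c CM
  have hdetC : CM.det
      = ∏ i : Fin m, ∏ j ∈ Finset.Ioi i, ((s ((i:ℕ)+1))^2 - (s ((j:ℕ)+1))^2) := by
    have h := (Matrix.det_eval_matrixOfPolynomials_eq_det_vandermonde
      (fun j : Fin m => -(s ((j:ℕ)+1))^2) (fun k : Fin m => gQ (k:ℕ))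
      (fun k => gQ_natDegree _) (fun k => gQ_monic _)).symm
    calc CM.det = (Matrix.vandermonde (fun j : Fin m => -(s ((j:ℕ)+1))^2)).det := h
      _ = _ := by
        rw [Matrix.det_vandermonde]
        exact Finset.prod_congr rfl fun i _ => Finset.prod_congr rfl fun j _ => by ring
  -- assemble
  rw [hset, ← integral_indicator (MeasurableSet.univ_pi hImeas)]
  have hfun : (fun t : Fin m → ℝ => (Set.univ.pi I).indicator (fun t : Fin m → ℝ =>
        (∏ k : Fin m, t k * Real.exp (-(t k)^2/2)) *
          ∏ k : Fin m, ∏ j ∈ Finset.Iio k, ((t j)^2 - (t k)^2)) t)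
      = fun t : Fin m → ℝ =>
        (Matrix.of (fun j k : Fin m => (I j).indicator (gf (k:ℕ)) (t j))).det :=
    funext hpoint
  rw [hfun, hstep, hALB, Matrix.det_mul, hdetL, one_mul, hdetB, hdetC]
  congr 1
  · -- exponential product
    rw [hc]
    rw [Fin.prod_univ_eq_prod_range (fun n => Real.exp (-(s (n+1))^2/2)) m]
    rw [← Finset.Ico_add_one_right_eq_Icc, Finset.prod_Ico_eq_prod_range]
    try simp only [Nat.add_sub_cancel, Nat.add_sub_cancel_left]
    exact Finset.prod_congr rfl fun n _ => by rw [Nat.add_comm]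
  · -- Vandermonde product
    rw [Finset.prod_comm' (t' := Finset.univ) (s' := fun j => Finset.Iio j)
      (fun x y => by simp [Finset.mem_Iio, Finset.mem_Ioi, and_comm])]
    have hinner : ∀ k : Fin m,
        (∏ i ∈ Finset.Iio k, ((s ((i:ℕ)+1))^2 - (s ((k:ℕ)+1))^2))
        = ∏ i ∈ Finset.range (k:ℕ), ((s (i+1))^2 - (s ((k:ℕ)+1))^2) :=
      fun k => prod_Iio_fin k (fun n => (s (n+1))^2 - (s ((k:ℕ)+1))^2)
    rw [Finset.prod_congr rfl (fun k _ => hinner k)]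
    rw [Fin.prod_univ_eq_prod_range
      (fun K => ∏ i ∈ Finset.range K, ((s (i+1))^2 - (s (K+1))^2)) m]
    rw [← Finset.Ico_add_one_right_eq_Icc, Finset.prod_Ico_eq_prod_range]
    try simp only [Nat.add_sub_cancel, Nat.add_sub_cancel_left]
    refine Finset.prod_congr rfl fun K _ => ?_
    rw [Finset.prod_Ico_eq_prod_range]
    try simp only [Nat.add_sub_cancel, Nat.add_sub_cancel_left]
    refine Finset.prod_congr rfl fun J _ => ?_
    rw [Nat.add_comm 1 J, Nat.add_comm 1 K]
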